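/- Let M be a matroid on [p], and let Γ be the face poset of the independence complex of M together with a maximum element 1̂ adjoined. Let μ_Γ be the Möbius function of Γ. If the set of coloops of M is 𝔄, then the set {F independent in M : μ_Γ(F, 1̂) ≠ 0} equals the set of independent sets of M containing 𝔄, i.e., the sets of the form J ∪ 𝔄 where J is independent in the contraction M/𝔄. In particular, as a set of indicator vectors in {0,1}^p, the Möbius support is the translate of the independence complex of M/𝔄 by the indicator vector of 𝔄. -/

import Mathlib

open Finset

/-- `M` is the independence complex of a matroid on `[p]`: a nonempty, downward closed
family of finite subsets of `[p]` satisfying the exchange (augmentation) axiom. -/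
def IsMatroidComplex {p : ℕ} (M : Finset (Finset (Fin p))) : Prop :=
  M.Nonempty ∧
  (∀ F ∈ M, ∀ G ⊆ F, G ∈ M) ∧
  (∀ F ∈ M, ∀ G ∈ M, F.card < G.card → ∃ x ∈ G \ F, insert x F ∈ M)

/-- A basis: a maximal independent set. -/
def IsBasisOf {p : ℕ} (M : Finset (Finset (Fin p))) (B : Finset (Fin p)) : Prop :=
  B ∈ M ∧ ∀ G ∈ M, B ⊆ G → G = B

/-- A coloop: an element lying in every basis. -/
def IsColoop {p : ℕ} (M : Finset (Finset (Fin p))) (i : Fin p) : Prop :=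
  ∀ B : Finset (Fin p), IsBasisOf M B → i ∈ B

open scoped Classical

namespace MatroidAux

variable {p : ℕ}

noncomputable def s (M : Finset (Finset (Fin p))) : ℤ := ∑ H ∈ M, (-1 : ℤ) ^ H.card

noncomputable def ctr (M : Finset (Finset (Fin p))) (F : Finset (Fin p)) :
    Finset (Finset (Fin p)) :=
  (M.filter (fun H => F ⊆ H)).image (fun H => H \ F)

lemma mem_ctr {M : Finset (Finset (Fin p))} {F J : Finset (Fin p)} :
    J ∈ ctr M F ↔ Disjoint J F ∧ J ∪ F ∈ M := by
  constructor
  · rintro h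
    simp only [ctr, mem_image, mem_filter] at h
    obtain ⟨H, ⟨hHM, hFH⟩, rfl⟩ := h
    exact ⟨sdiff_disjoint, by rwa [sdiff_union_of_subset hFH]⟩
  · rintro ⟨hd, hm⟩
    simp only [ctr, mem_image, mem_filter]
    refine ⟨J ∪ F, ⟨hm, subset_union_right⟩, ?_⟩
    rw [union_sdiff_right, Finset.sdiff_eq_self_iff_disjoint.2 hd]

lemma empty_mem {M : Finset (Finset (Fin p))} (hM : IsMatroidComplex M) : ∅ ∈ M := by
  obtain ⟨⟨H, hH⟩, hdown, _⟩ := hM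
  exact hdown H hH ∅ (empty_subset H)

lemma exists_basis_superset {M : Finset (Finset (Fin p))} (hM : IsMatroidComplex M)
    {F : Finset (Fin p)} (hF : F ∈ M) : ∃ B, F ⊆ B ∧ IsBasisOf M B := by
  obtain ⟨B, hB, hmax⟩ := (M.filter (fun H => F ⊆ H)).exists_max_image Finset.card
    ⟨F, mem_filter.2 ⟨hF, subset_rfl⟩⟩
  rw [mem_filter] at hB
  refine ⟨B, hB.2, hB.1, fun G hG hBG => ?_⟩
  have hG' : G ∈ M.filter (fun H => F ⊆ H) := mem_filter.2 ⟨hG, hB.2.trans hBG⟩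
  exact (eq_of_subset_of_card_le hBG (hmax G hG')).symm

lemma basis_card_eq {M : Finset (Finset (Fin p))} (hM : IsMatroidComplex M)
    {B B' : Finset (Fin p)} (hB : IsBasisOf M B) (hB' : IsBasisOf M B') :
    B.card = B'.card := by
  rcases lt_trichotomy B.card B'.card with h | h | h
  · obtain ⟨x, hx, hins⟩ := hM.2.2 B hB.1 B' hB'.1 h
    have := hB.2 _ hins (subset_insert x B)
    rw [mem_sdiff] at hx
    exact absurd (this ▸ mem_insert_self x B) hx.2
  · exact h
  · obtain ⟨x, hx, hins⟩ := hM.2.2 B' hB'.1 B hB.1 h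
    have := hB'.2 _ hins (subset_insert x B')
    rw [mem_sdiff] at hx
    exact absurd (this ▸ mem_insert_self x B') hx.2

lemma card_le_basis {M : Finset (Finset (Fin p))} (hM : IsMatroidComplex M)
    {G B : Finset (Fin p)} (hG : G ∈ M) (hB : IsBasisOf M B) : G.card ≤ B.card := by
  obtain ⟨B₂, hGB₂, hB₂⟩ := exists_basis_superset hM hG
  calc G.card ≤ B₂.card := card_le_card hGB₂
    _ = B.card := basis_card_eq hM hB₂ hB

lemma basis_of_card {M : Finset (Finset (Fin p))} (hM : IsMatroidComplex M)
    {G B : Finset (Fin p)} (hG : G ∈ M) (hB : IsBasisOf M B) (h : B.card ≤ G.card) :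
    IsBasisOf M G := by
  refine ⟨hG, fun G' hG' hGG' => ?_⟩
  exact (eq_of_subset_of_card_le hGG' ((card_le_basis hM hG' hB).trans h)).symm

lemma grow_to_basis {M : Finset (Finset (Fin p))} (hM : IsMatroidComplex M) :
    ∀ (n : ℕ) (F B : Finset (Fin p)), F ∈ M → IsBasisOf M B → B.card - F.card ≤ n →
      ∃ B', IsBasisOf M B' ∧ F ⊆ B' ∧ B' ⊆ B ∪ F := by
  intro n
  induction n with
  | zero =>
    intro F B hF hB h
    have : B.card ≤ F.card := by omega
    exact ⟨F, basis_of_card hM hF hB this, subset_rfl, subset_union_right⟩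
  | succ n ih =>
    intro F B hF hB h
    by_cases hc : B.card ≤ F.card
    · exact ⟨F, basis_of_card hM hF hB hc, subset_rfl, subset_union_right⟩
    · push_neg at hc
      obtain ⟨x, hx, hins⟩ := hM.2.2 F hF B hB.1 hc
      rw [mem_sdiff] at hx
      have hcard : (insert x F).card = F.card + 1 := card_insert_of_notMem hx.2
      obtain ⟨B', hB', hsub, hsub'⟩ := ih (insert x F) B hins hB (by omega)
      refine ⟨B', hB', (subset_insert x F).trans hsub, hsub'.trans ?_⟩
      rw [union_insert, insert_eq_self.2 (mem_union_left _ hx.1)]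

lemma ctr_isMatroid {M : Finset (Finset (Fin p))} (hM : IsMatroidComplex M)
    {F : Finset (Fin p)} (hF : F ∈ M) : IsMatroidComplex (ctr M F) := by
  refine ⟨⟨∅, mem_ctr.2 ⟨disjoint_empty_left F, by simpa using hF⟩⟩, ?_, ?_⟩
  · intro J hJ K hK
    rw [mem_ctr] at hJ ⊢
    refine ⟨disjoint_of_subset_left hK hJ.1, ?_⟩
    exact hM.2.1 _ hJ.2 _ (union_subset_union_left hK)
  · intro J hJ K hK hcard
    rw [mem_ctr] at hJ hK
    have hcard' : (J ∪ F).card < (K ∪ F).card := by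
      rw [card_union_of_disjoint hJ.1, card_union_of_disjoint hK.1]; omega
    obtain ⟨x, hx, hins⟩ := hM.2.2 _ hJ.2 _ hK.2 hcard'
    rw [mem_sdiff, mem_union, mem_union] at hx
    push_neg at hx
    have hxK : x ∈ K := hx.1.resolve_right hx.2.2
    refine ⟨x, mem_sdiff.2 ⟨hxK, hx.2.1⟩, mem_ctr.2 ⟨?_, ?_⟩⟩
    · rw [disjoint_insert_left]
      exact ⟨hx.2.2, hJ.1⟩
    · rwa [insert_union]

lemma ctr_basis_iff {M : Finset (Finset (Fin p))} (hM : IsMatroidComplex M)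
    {F J : Finset (Fin p)} (hF : F ∈ M) :
    IsBasisOf (ctr M F) J ↔ Disjoint J F ∧ IsBasisOf M (J ∪ F) := by
  constructor
  · rintro ⟨hJ, hmax⟩
    rw [mem_ctr] at hJ
    refine ⟨hJ.1, hJ.2, fun G hG hsub => ?_⟩
    have hFG : F ⊆ G := subset_union_right.trans hsub
    have hGF : G \ F ∈ ctr M F := mem_ctr.2 ⟨sdiff_disjoint, by rwa [sdiff_union_of_subset hFG]⟩
    have hJG : J ⊆ G \ F := subset_sdiff.2 ⟨subset_union_left.trans hsub, hJ.1⟩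
    have := hmax _ hGF hJG
    calc G = G \ F ∪ F := (sdiff_union_of_subset hFG).symm
      _ = J ∪ F := by rw [this]
  · rintro ⟨hd, hB, hmax⟩
    refine ⟨mem_ctr.2 ⟨hd, hB⟩, fun K hK hJK => ?_⟩
    rw [mem_ctr] at hK
    have := hmax _ hK.2 (union_subset_union_left hJK)
    calc K = (K ∪ F) \ F := by
            rw [union_sdiff_right, Finset.sdiff_eq_self_iff_disjoint.2 hK.1]
      _ = (J ∪ F) \ F := by rw [this]
      _ = J := by rw [union_sdiff_right, Finset.sdiff_eq_self_iff_disjoint.2 hd]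

lemma coloop_of_ctr_coloop {M : Finset (Finset (Fin p))} (hM : IsMatroidComplex M)
    {F : Finset (Fin p)} (hF : F ∈ M) {i : Fin p} (h : IsColoop (ctr M F) i) :
    IsColoop M i := by
  intro B hB
  obtain ⟨B', hB', hFB', hBB'⟩ := grow_to_basis hM (B.card - F.card) F B hF hB le_rfl
  have hbJ : IsBasisOf (ctr M F) (B' \ F) := by
    rw [ctr_basis_iff hM hF]
    exact ⟨sdiff_disjoint, by rwa [sdiff_union_of_subset hFB']⟩
  have hi := h _ hbJ
  rw [mem_sdiff] at hi
  rcases mem_union.1 (hBB' hi.1) with h' | h'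
  · exact h'
  · exact absurd h' hi.2

lemma ctr_coloop_of_coloop {M : Finset (Finset (Fin p))} (hM : IsMatroidComplex M)
    {F : Finset (Fin p)} (hF : F ∈ M) {i : Fin p} (h : IsColoop M i) (hiF : i ∉ F) :
    IsColoop (ctr M F) i := by
  intro J hJ
  rw [ctr_basis_iff hM hF] at hJ
  have := h _ hJ.2
  rcases mem_union.1 this with h' | h'
  · exact h'
  · exact absurd h' hiF

lemma s_eq_zero_of_coloop {M : Finset (Finset (Fin p))} (hM : IsMatroidComplex M)
    {i : Fin p} (h : IsColoop M i) : s M = 0 := by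
  have hins : ∀ H ∈ M, insert i H ∈ M := by
    intro H hH
    obtain ⟨B, hHB, hB⟩ := exists_basis_superset hM hH
    exact hM.2.1 B hB.1 _ (insert_subset_iff.2 ⟨h B hB, hHB⟩)
  have key : ∑ H ∈ M.filter (fun H => i ∈ H), (-1:ℤ)^H.card
      = ∑ H ∈ M.filter (fun H => i ∉ H), -((-1:ℤ)^H.card) := by
    refine Finset.sum_nbij' (fun H => H.erase i) (fun H => insert i H) ?_ ?_ ?_ ?_ ?_
    · intro H hH
      rw [mem_filter] at hH ⊢
      exact ⟨hM.2.1 H hH.1 _ (Finset.erase_subset i H), notMem_erase i H⟩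
    · intro H hH
      rw [mem_filter] at hH ⊢
      exact ⟨hins H hH.1, mem_insert_self i H⟩
    · intro H hH
      rw [mem_filter] at hH
      exact insert_erase hH.2
    · intro H hH
      rw [mem_filter] at hH
      exact erase_insert hH.2
    · intro H hH
      rw [mem_filter] at hH
      obtain ⟨m, hm⟩ : ∃ m, H.card = m + 1 :=
        ⟨H.card - 1, by have := card_ne_zero_of_mem hH.2; omega⟩
      rw [card_erase_of_mem hH.2, hm]
      simp [pow_succ]
  have := Finset.sum_filter_add_sum_filter_not M (fun H => i ∈ H) (fun H => (-1:ℤ)^H.card)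
  unfold s
  rw [← this, key]
  simp [sum_neg_distrib]

lemma s_sign : ∀ (n : ℕ) (M : Finset (Finset (Fin p))), M.card ≤ n → IsMatroidComplex M →
    (∀ i, ¬ IsColoop M i) → ∀ B, IsBasisOf M B → 0 < (-1:ℤ)^B.card * s M := by
  intro n
  induction n with
  | zero =>
    intro M hn hM _ _ _
    obtain ⟨H, hH⟩ := hM.1
    have := card_pos.2 (⟨H, hH⟩ : M.Nonempty)
    omega
  | succ n ih =>
    intro M hn hM hnc B hB
    by_cases hE : ∀ H ∈ M, H = ∅
    · have hMeq : M = {∅} := Finset.eq_singleton_iff_unique_mem.2 ⟨empty_mem hM, hE⟩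
      have hB0 : B = ∅ := hE B hB.1
      rw [hMeq, hB0]
      simp [s]
    · push_neg at hE
      obtain ⟨H0, hH0, hne⟩ := hE
      obtain ⟨e, he⟩ := hne
      have hse : {e} ∈ M := hM.2.1 H0 hH0 {e} (singleton_subset_iff.2 he)
      set D := M.filter (fun H => e ∉ H) with hDdef
      set C := ctr M {e} with hCdef
      have h1 : ∑ H ∈ M.filter (fun H => e ∈ H), (-1:ℤ)^H.card
          = ∑ J ∈ C, -((-1:ℤ)^J.card) := by
        refine Finset.sum_nbij' (fun H => H.erase e) (fun J => insert e J) ?_ ?_ ?_ ?_ ?_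
        · intro H hH
          rw [mem_filter] at hH
          simp only [hCdef, mem_ctr]
          refine ⟨by simp, ?_⟩
          have : H.erase e ∪ {e} = H := by
            rw [union_comm, ← insert_eq, insert_erase hH.2]
          rw [this]
          exact hH.1
        · intro J hJ
          simp only [hCdef, mem_ctr] at hJ
          rw [mem_filter]
          have heq : insert e J = J ∪ {e} := by rw [union_comm, ← insert_eq]
          exact ⟨by show insert e J ∈ M; rw [heq]; exact hJ.2, mem_insert_self e J⟩
        · intro H hH
          rw [mem_filter] at hH
          exact insert_erase hH.2
        · intro J hJ
          simp only [hCdef, mem_ctr] at hJ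
          exact erase_insert (Finset.disjoint_singleton_right.1 hJ.1)
        · intro H hH
          rw [mem_filter] at hH
          obtain ⟨m, hm⟩ : ∃ m, H.card = m + 1 :=
            ⟨H.card - 1, by have := card_ne_zero_of_mem hH.2; omega⟩
          rw [card_erase_of_mem hH.2, hm]
          simp [pow_succ]
      have h3 : s M = (∑ H ∈ M.filter (fun H => e ∈ H), (-1:ℤ)^H.card)
          + (∑ H ∈ M.filter (fun H => ¬ e ∈ H), (-1:ℤ)^H.card) :=
        (Finset.sum_filter_add_sum_filter_not M _ _).symm
      have h4 : ∑ J ∈ C, -((-1:ℤ)^J.card) = - s C := by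
        rw [s, ← Finset.sum_neg_distrib]
      have h5 : s D = ∑ H ∈ M.filter (fun H => ¬ e ∈ H), (-1:ℤ)^H.card := rfl
      have hsplit : s M = s D - s C := by rw [h3, h1, h4, ← h5]; ring
      -- the deletion is a matroid complex
      have hDM : IsMatroidComplex D := by
        refine ⟨⟨∅, ?_⟩, ?_, ?_⟩
        · simp only [hDdef, mem_filter]
          exact ⟨empty_mem hM, notMem_empty e⟩
        · intro H hH G hG
          simp only [hDdef, mem_filter] at hH ⊢
          exact ⟨hM.2.1 H hH.1 G hG, fun hc => hH.2 (hG hc)⟩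
        · intro F hF G hG hcard
          simp only [hDdef, mem_filter] at hF hG
          obtain ⟨x, hx, hins⟩ := hM.2.2 F hF.1 G hG.1 hcard
          rw [mem_sdiff] at hx
          refine ⟨x, mem_sdiff.2 hx, ?_⟩
          simp only [hDdef, mem_filter]
          refine ⟨hins, ?_⟩
          rw [mem_insert]
          rintro (rfl | hc)
          · exact hG.2 hx.1
          · exact hF.2 hc
      have hCM : IsMatroidComplex C := ctr_isMatroid hM hse
      -- cardinality decreases
      have hDn : D.card ≤ n := by
        have : D ⊂ M := by
          rw [ssubset_iff_of_subset (filter_subset _ _)]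
          refine ⟨{e}, hse, ?_⟩
          simp only [hDdef, mem_filter]
          simp
        have := card_lt_card this
        omega
      have hCn : C.card ≤ n := by
        have h6 : C.card ≤ (M.filter (fun H => {e} ⊆ H)).card := card_image_le
        have h7 : (M.filter (fun H => {e} ⊆ H)) ⊂ M := by
          rw [ssubset_iff_of_subset (filter_subset _ _)]
          refine ⟨∅, empty_mem hM, ?_⟩
          simp
        have := card_lt_card h7
        omega
      -- the contraction is coloop-free
      have hCfree : ∀ i, ¬ IsColoop C i := fun i hi => hnc i (coloop_of_ctr_coloop hM hse hi)
      -- a basis of C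
      obtain ⟨B₁, hB₁, hsB₁, _⟩ := grow_to_basis hM (B.card - ({e} : Finset (Fin p)).card)
        {e} B hse hB le_rfl
      have hJb : IsBasisOf C (B₁ \ {e}) := by
        rw [show C = ctr M {e} from hCdef, ctr_basis_iff hM hse]
        exact ⟨sdiff_disjoint, by rwa [sdiff_union_of_subset hsB₁]⟩
      have hJcard : (B₁ \ {e}).card = B.card - 1 := by
        rw [card_sdiff_of_subset hsB₁, card_singleton, basis_card_eq hM hB₁ hB]
      have hBpos : 1 ≤ B.card := by
        have := card_le_card hsB₁
        rw [card_singleton] at this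
        rw [← basis_card_eq hM hB₁ hB]
        omega
      have hCpos := ih C hCn hCM hCfree _ hJb
      rw [hJcard] at hCpos
      -- the deletion part is nonnegative
      have hDge : 0 ≤ (-1:ℤ)^B.card * s D := by
        by_cases hDc : ∃ i, IsColoop D i
        · obtain ⟨i, hi⟩ := hDc
          rw [s_eq_zero_of_coloop hDM hi, mul_zero]
        · push_neg at hDc
          have hnce : ¬ IsColoop M e := hnc e
          rw [IsColoop] at hnce
          push_neg at hnce
          obtain ⟨B₀, hB₀, heB₀⟩ := hnce
          have hB₀D : IsBasisOf D B₀ := by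
            refine ⟨?_, fun G hG hsub => hB₀.2 G (mem_filter.1 hG).1 hsub⟩
            simp only [hDdef, mem_filter]
            exact ⟨hB₀.1, heB₀⟩
          have := ih D hDn hDM hDc B₀ hB₀D
          rw [basis_card_eq hM hB₀ hB] at this
          exact le_of_lt this
      have hpow : (-1:ℤ)^B.card = -(-1:ℤ)^(B.card - 1) := by
        rw [show B.card = (B.card - 1) + 1 by omega]
        simp [pow_succ]
      have hfinal : (-1:ℤ)^B.card * s M
          = (-1:ℤ)^B.card * s D + (-1:ℤ)^(B.card - 1) * s C := by
        rw [hsplit, hpow]; ring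
      rw [hfinal]
      linarith

lemma mu_eq {M : Finset (Finset (Fin p))} (hM : IsMatroidComplex M)
    (μ₂ : Finset (Fin p) → Finset (Fin p) → ℤ)
    (hrefl : ∀ F ∈ M, μ₂ F F = 1)
    (hrec : ∀ F ∈ M, ∀ G ∈ M, F ⊆ G → F ≠ G →
      (∑ H ∈ M.filter (fun H => F ⊆ H ∧ H ⊆ G), μ₂ F H) = 0) :
    ∀ (n : ℕ) (F G : Finset (Fin p)), F ∈ M → G ∈ M → F ⊆ G → (G \ F).card ≤ n →
      μ₂ F G = (-1:ℤ)^((G \ F).card) := by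
  intro n
  induction n with
  | zero =>
    intro F G hF hG hFG hc
    have h0 : G \ F = ∅ := card_eq_zero.1 (by omega)
    have hGF : G ⊆ F := by rwa [sdiff_eq_empty_iff_subset] at h0
    have : F = G := Subset.antisymm hFG hGF
    subst this
    rw [hrefl F hF, h0]
    simp
  | succ n ih =>
    intro F G hF hG hFG hc
    by_cases hFG' : F = G
    · subst hFG'
      rw [hrefl F hF]
      simp
    · have hTne : (G \ F).Nonempty := by
        rw [sdiff_nonempty]
        intro h
        exact hFG' (Subset.antisymm hFG h)
      set T := M.filter (fun H => F ⊆ H ∧ H ⊆ G) with hTdef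
      have hGT : G ∈ T := mem_filter.2 ⟨hG, hFG, subset_rfl⟩
      have hsum := hrec F hF G hG hFG hFG'
      have hsum2 : ∑ H ∈ T, ((-1:ℤ)^((H \ F).card)) = 0 := by
        have heq : ∑ H ∈ T, ((-1:ℤ)^((H \ F).card))
            = ∑ S ∈ (G \ F).powerset, (-1:ℤ)^S.card := by
          refine Finset.sum_nbij' (fun H => H \ F) (fun S => S ∪ F) ?_ ?_ ?_ ?_ ?_
          · intro H hH
            simp only [hTdef, mem_filter] at hH
            rw [mem_powerset]
            exact sdiff_subset_sdiff hH.2.2 Subset.rfl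
          · intro S hS
            rw [mem_powerset] at hS
            simp only [hTdef, mem_filter]
            have hSG : S ⊆ G := hS.trans sdiff_subset
            exact ⟨hM.2.1 G hG _ (union_subset hSG hFG), subset_union_right,
              union_subset hSG hFG⟩
          · intro H hH
            simp only [hTdef, mem_filter] at hH
            exact sdiff_union_of_subset hH.2.1
          · intro S hS
            rw [mem_powerset] at hS
            have hd : Disjoint S F := disjoint_of_subset_left hS sdiff_disjoint
            show (S ∪ F) \ F = S
            rw [union_sdiff_right, Finset.sdiff_eq_self_iff_disjoint.2 hd]
          · intro H _
            rfl
        rw [heq]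
        exact Finset.sum_powerset_neg_one_pow_card_of_nonempty hTne
      have h5 : ∑ H ∈ T.erase G, μ₂ F H = ∑ H ∈ T.erase G, ((-1:ℤ)^((H \ F).card)) := by
        apply sum_congr rfl
        intro H hH
        rw [mem_erase] at hH
        have hHT := hH.2
        simp only [hTdef, mem_filter] at hHT
        apply ih F H hF hHT.1 hHT.2.1
        have hsub : H \ F ⊆ G \ F := sdiff_subset_sdiff hHT.2.2 Subset.rfl
        have hlt : (H \ F).card < (G \ F).card := by
          apply card_lt_card
          rw [Finset.ssubset_iff_subset_ne]
          refine ⟨hsub, fun heq => hH.1 ?_⟩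
          calc H = (H \ F) ∪ F := (sdiff_union_of_subset hHT.2.1).symm
            _ = (G \ F) ∪ F := by rw [heq]
            _ = G := sdiff_union_of_subset hFG
        omega
      have h6 := Finset.add_sum_erase T (μ₂ F) hGT
      have h7 := Finset.add_sum_erase T (fun H => (-1:ℤ)^((H \ F).card)) hGT
      rw [hsum] at h6
      rw [hsum2] at h7
      linarith

end MatroidAux

/-- Let `Γ` be the face poset of the independence complex of a matroid `M`, with a maximum
`1̂` adjoined, and let `μ` be its Möbius function (encoded by `μ₂ F G = μ_Γ(F, G)` for faces
and `μtop F = μ_Γ(F, 1̂)`, via the defining recurrences). If `𝔄` is the set of coloops of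
`M`, then `μ_Γ(F, 1̂) ≠ 0` exactly for the independent sets `F` containing `𝔄`, i.e. the
sets `J ∪ 𝔄` with `J` independent in the contraction `M/𝔄`. -/
theorem matroid_moebius_support_eq_contraction {p : ℕ} (M : Finset (Finset (Fin p)))
    (hM : IsMatroidComplex M)
    (μ₂ : Finset (Fin p) → Finset (Fin p) → ℤ) (μtop : Finset (Fin p) → ℤ)
    (hrefl : ∀ F ∈ M, μ₂ F F = 1)
    (hzero : ∀ F ∈ M, ∀ G ∈ M, ¬ F ⊆ G → μ₂ F G = 0)
    (hrec : ∀ F ∈ M, ∀ G ∈ M, F ⊆ G → F ≠ G →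
      (∑ H ∈ M.filter (fun H => F ⊆ H ∧ H ⊆ G), μ₂ F H) = 0)
    (hrectop : ∀ F ∈ M, (∑ H ∈ M.filter (fun H => F ⊆ H), μ₂ F H) + μtop F = 0) :
    ∀ F ∈ M, (μtop F ≠ 0 ↔ ∀ i : Fin p, IsColoop M i → i ∈ F) := by
  intro F hF
  have hmu : ∀ H ∈ M, F ⊆ H → μ₂ F H = (-1:ℤ)^((H \ F).card) := fun H hH hFH =>
    MatroidAux.mu_eq hM μ₂ hrefl hrec (H \ F).card F H hF hH hFH le_rfl
  have hsum : ∑ H ∈ M.filter (fun H => F ⊆ H), μ₂ F H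
      = MatroidAux.s (MatroidAux.ctr M F) := by
    rw [MatroidAux.s]
    refine Finset.sum_nbij' (fun H => H \ F) (fun J => J ∪ F) ?_ ?_ ?_ ?_ ?_
    · intro H hH
      rw [mem_filter] at hH
      exact MatroidAux.mem_ctr.2 ⟨sdiff_disjoint, by rw [sdiff_union_of_subset hH.2]; exact hH.1⟩
    · intro J hJ
      rw [MatroidAux.mem_ctr] at hJ
      exact mem_filter.2 ⟨hJ.2, subset_union_right⟩
    · intro H hH
      rw [mem_filter] at hH
      exact sdiff_union_of_subset hH.2
    · intro J hJ
      rw [MatroidAux.mem_ctr] at hJ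
      show (J ∪ F) \ F = J
      rw [union_sdiff_right, Finset.sdiff_eq_self_iff_disjoint.2 hJ.1]
    · intro H hH
      rw [mem_filter] at hH
      exact hmu H hH.1 hH.2
  have htop : μtop F = - MatroidAux.s (MatroidAux.ctr M F) := by
    have h := hrectop F hF
    rw [hsum] at h
    linarith
  constructor
  · intro hne i hic
    by_contra hiF
    have hcc : IsColoop (MatroidAux.ctr M F) i :=
      MatroidAux.ctr_coloop_of_coloop hM hF hic hiF
    have hz := MatroidAux.s_eq_zero_of_coloop (MatroidAux.ctr_isMatroid hM hF) hcc
    rw [htop, hz] at hne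
    simp at hne
  · intro hall
    have hCM := MatroidAux.ctr_isMatroid hM hF
    have hfree : ∀ i, ¬ IsColoop (MatroidAux.ctr M F) i := by
      intro i hi
      have hcM : IsColoop M i := MatroidAux.coloop_of_ctr_coloop hM hF hi
      have hiF : i ∈ F := hall i hcM
      obtain ⟨B, _, hB⟩ := MatroidAux.exists_basis_superset hCM (MatroidAux.empty_mem hCM)
      have hiB := hi B hB
      have hd := (MatroidAux.mem_ctr.1 hB.1).1
      exact absurd hiF (Finset.disjoint_left.1 hd hiB)
    obtain ⟨B, _, hB⟩ := MatroidAux.exists_basis_superset hCM (MatroidAux.empty_mem hCM)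
    have hpos := MatroidAux.s_sign (MatroidAux.ctr M F).card _ le_rfl hCM hfree B hB
    have hsne : MatroidAux.s (MatroidAux.ctr M F) ≠ 0 := by
      intro h0
      rw [h0, mul_zero] at hpos
      exact lt_irrefl 0 hpos
    rw [htop]
    simpa using hsne
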